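/- Let q ≥ 2 be a real number, and let m ≥ 0, r ≥ 1 be integers. Set L = ∏_{j=0}^{r-1} (1 - q^{-(m+r-j)}) and p = L / (q^r - 1 + L). Then 0 ≤ 1 - q^r · p ≤ 2 · q^{-(m+1)}. -/

import Mathlib

/-- Weierstrass product inequality: `1 - ∑ f ≤ ∏ (1 - f)` for `0 ≤ f i ≤ 1`. -/
lemma aux_one_sub_sum_le_prod (s : Finset ℕ) (f : ℕ → ℝ)
    (h0 : ∀ i ∈ s, 0 ≤ f i) (h1 : ∀ i ∈ s, f i ≤ 1) :
    1 - ∑ i ∈ s, f i ≤ ∏ i ∈ s, (1 - f i) := by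
  induction s using Finset.cons_induction with
  | empty => simp
  | cons a s ha ih =>
    rw [Finset.sum_cons, Finset.prod_cons]
    have h0a := h0 a (Finset.mem_cons_self a s)
    have h1a := h1 a (Finset.mem_cons_self a s)
    have ih' := ih (fun i hi => h0 i (Finset.mem_cons_of_mem hi))
      (fun i hi => h1 i (Finset.mem_cons_of_mem hi))
    have hs0 : (0:ℝ) ≤ ∑ i ∈ s, f i :=
      Finset.sum_nonneg fun i hi => h0 i (Finset.mem_cons_of_mem hi)
    nlinarith [mul_le_mul_of_nonneg_left ih' (by linarith : (0:ℝ) ≤ 1 - f a)]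

/-- For `q ≥ 2`, `L = ∏_{j=0}^{r-1} (1 - q^{-(m+r-j)})` and
`p = L / (q^r - 1 + L)` (the binomial parameter for complete intersections),
one has `0 ≤ 1 - q^r · p ≤ 2 · q^{-(m+1)}`. -/
theorem binomial_parameter_estimate (q : ℝ) (hq : 2 ≤ q) (m r : ℕ) (hr : 1 ≤ r)
    (L : ℝ) (hL : L = ∏ j ∈ Finset.range r, (1 - (q ^ (m + r - j))⁻¹))
    (p : ℝ) (hp : p = L / (q ^ r - 1 + L)) :
    0 ≤ 1 - q ^ r * p ∧ 1 - q ^ r * p ≤ 2 * (q ^ (m + 1))⁻¹ := by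
  have hq0 : (0:ℝ) < q := by linarith
  have hq1 : (1:ℝ) < q := by linarith
  -- bounds on the factors
  have hfac0 : ∀ j ∈ Finset.range r, (0:ℝ) ≤ (q ^ (m + r - j))⁻¹ := fun j _ =>
    inv_nonneg.mpr (pow_nonneg hq0.le _)
  have hfac1 : ∀ j ∈ Finset.range r, ((q ^ (m + r - j))⁻¹ : ℝ) ≤ 1 := by
    intro j hj
    rw [Finset.mem_range] at hj
    have h1 : (1:ℝ) ≤ q ^ (m + r - j) := one_le_pow₀ hq1.le
    exact inv_le_one_of_one_le₀ h1
  have hL1 : L ≤ 1 := by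
    rw [hL]
    apply Finset.prod_le_one
    · intro j hj; linarith [hfac1 j hj]
    · intro j hj; linarith [hfac0 j hj]
  have hL0 : 0 ≤ L := by
    rw [hL]
    exact Finset.prod_nonneg fun j hj => by linarith [hfac1 j hj]
  -- key bound : 1 - L ≤ 2 * (q^(m+1))⁻¹
  have hsum : ∑ j ∈ Finset.range r, ((q ^ (m + r - j))⁻¹ : ℝ)
      ≤ 2 * (q ^ (m + 1))⁻¹ := by
    have hrw : ∀ j ∈ Finset.range r,
        ((q ^ (m + r - j))⁻¹ : ℝ) = (q ^ (m + 1))⁻¹ * (q ^ (r - 1 - j))⁻¹ := by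
      intro j hj
      rw [Finset.mem_range] at hj
      rw [← mul_inv, ← pow_add]
      congr 2
      omega
    rw [Finset.sum_congr rfl hrw, ← Finset.mul_sum]
    have hrefl : ∑ j ∈ Finset.range r, ((q ^ (r - 1 - j))⁻¹ : ℝ)
        = ∑ k ∈ Finset.range r, (q ^ k)⁻¹ := by
      rw [← Finset.sum_range_reflect]
      apply Finset.sum_congr rfl
      intro j hj
      rw [Finset.mem_range] at hj
      congr 2
      omega
    have hgeo : ∑ k ∈ Finset.range r, ((q ^ k)⁻¹ : ℝ) ≤ 2 := by
      calc ∑ k ∈ Finset.range r, ((q ^ k)⁻¹ : ℝ)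
          ≤ ∑ k ∈ Finset.range r, ((1:ℝ)/2) ^ k := by
            apply Finset.sum_le_sum
            intro k _
            rw [div_pow, one_pow, one_div]
            exact inv_anti₀ (by positivity) (pow_le_pow_left₀ (by norm_num) hq k)
        _ ≤ 2 := sum_geometric_two_le r
    rw [hrefl, mul_comm]
    have hpos : (0:ℝ) ≤ (q ^ (m + 1))⁻¹ := by positivity
    exact mul_le_mul_of_nonneg_right hgeo hpos
  have hkey : 1 - L ≤ 2 * (q ^ (m + 1))⁻¹ := by
    have := aux_one_sub_sum_le_prod (Finset.range r) (fun j => (q ^ (m + r - j))⁻¹)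
      hfac0 hfac1
    rw [← hL] at this
    linarith
  -- denominator positivity
  have hqr : (2:ℝ) ≤ q ^ r := by
    calc (2:ℝ) ≤ q := hq
      _ = q ^ 1 := (pow_one q).symm
      _ ≤ q ^ r := pow_le_pow_right₀ hq1.le hr
  have hD : 0 < q ^ r - 1 + L := by linarith
  have hform : 1 - q ^ r * p = (1 - L) * (q ^ r - 1) / (q ^ r - 1 + L) := by
    rw [hp]
    field_simp
    ring
  constructor
  · rw [hform]
    apply div_nonneg _ hD.le
    apply mul_nonneg <;> linarith
  · rw [hform]
    have h1 : (1 - L) * (q ^ r - 1) / (q ^ r - 1 + L) ≤ 1 - L := by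
      rw [div_le_iff₀ hD]
      nlinarith
    linarith
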